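/- Let (E,z) be a semi-explicit gradient pair for H on X = X₁ × X₂ ⊆ ℝ^{n₁} × ℝ^{n₂}, let X̃ = X̃₁ × X̃₂ with X̃₁ ⊆ ℝ^{n₁} open and X̃₂ ⊆ ℝ^{n₂} open and convex, let φ = (φ₁,φ₂) ∈ C¹(X̃,X) be a diffeomorphism, and let U : X̃ → ℝ^{n×n} be continuous and pointwise invertible with block decomposition U = [[U₁₁, U₁₂],[U₂₁, U₂₂]] conforming to the splitting (n₁,n₂). Then the transformed gradient pair (Uᵀ(E∘φ)Dφ, U^{-1}(z∘φ)) for H∘φ is semi-explicit if and only if D_{x̃₂}φ₁(x̃) = 0 and U₁₂(x̃) = 0 for all x̃ ∈ X̃. -/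

import Mathlib

open Matrix Set

def basisP {n1 n2 : ℕ} (j : Fin n1 ⊕ Fin n2) : (Fin n1 → ℝ) × (Fin n2 → ℝ) :=
  Sum.elim (fun j1 => (Pi.single j1 1, 0)) (fun j2 => (0, Pi.single j2 1)) j

noncomputable def gradP {n1 n2 : ℕ} (f : ((Fin n1 → ℝ) × (Fin n2 → ℝ)) → ℝ)
    (x : (Fin n1 → ℝ) × (Fin n2 → ℝ)) : Fin n1 ⊕ Fin n2 → ℝ :=
  fun i => fderiv ℝ f x (basisP i)

noncomputable def jacP {n1 n2 : ℕ}
    (f : ((Fin n1 → ℝ) × (Fin n2 → ℝ)) → ((Fin n1 → ℝ) × (Fin n2 → ℝ)))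
    (x : (Fin n1 → ℝ) × (Fin n2 → ℝ)) :
    Matrix (Fin n1 ⊕ Fin n2) (Fin n1 ⊕ Fin n2) ℝ :=
  Matrix.of fun i j =>
    Sum.elim (fderiv ℝ f x (basisP j)).1 (fderiv ℝ f x (basisP j)).2 i

/-! ### Auxiliary lemmas -/

lemma basisP_repr {n1 n2 : ℕ} (v : (Fin n1 → ℝ) × (Fin n2 → ℝ)) :
    ∑ k : Fin n1 ⊕ Fin n2, Sum.elim v.1 v.2 k • basisP k = v := by
  rw [Fintype.sum_sum_type]
  apply Prod.ext <;>
  · simp only [basisP, Sum.elim_inl, Sum.elim_inr, Prod.fst_sum, Prod.snd_sum, Prod.smul_fst,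
      Prod.smul_snd, smul_zero, Finset.sum_const_zero, add_zero, zero_add, Prod.fst_add,
      Prod.snd_add, Prod.fst_zero, Prod.snd_zero]
    funext i
    simp [Finset.sum_apply, Pi.single_apply, mul_ite]

/-- The matrix of a continuous linear map in the basis `basisP`. -/
noncomputable def matP {n1 n2 : ℕ}
    (T : ((Fin n1 → ℝ) × (Fin n2 → ℝ)) →L[ℝ] ((Fin n1 → ℝ) × (Fin n2 → ℝ))) :
    Matrix (Fin n1 ⊕ Fin n2) (Fin n1 ⊕ Fin n2) ℝ :=
  Matrix.of fun i j => Sum.elim (T (basisP j)).1 (T (basisP j)).2 i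

lemma matP_comp {n1 n2 : ℕ}
    (K L : ((Fin n1 → ℝ) × (Fin n2 → ℝ)) →L[ℝ] ((Fin n1 → ℝ) × (Fin n2 → ℝ))) :
    matP (K.comp L) = matP K * matP L := by
  ext i j
  rw [Matrix.mul_apply]
  have h : L (basisP j) =
      ∑ k : Fin n1 ⊕ Fin n2, Sum.elim (L (basisP j)).1 (L (basisP j)).2 k • basisP k :=
    (basisP_repr _).symm
  simp only [matP, Matrix.of_apply, ContinuousLinearMap.comp_apply]
  conv_lhs => rw [h, map_sum]
  cases i with
  | inl i1 =>
    simp only [Sum.elim_inl, Prod.fst_sum, ContinuousLinearMap.map_smul, Prod.smul_fst,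
      Finset.sum_apply, Pi.smul_apply, smul_eq_mul]
    exact Finset.sum_congr rfl fun k _ => mul_comm _ _
  | inr i2 =>
    simp only [Sum.elim_inr, Prod.snd_sum, ContinuousLinearMap.map_smul, Prod.smul_snd,
      Finset.sum_apply, Pi.smul_apply, smul_eq_mul]
    exact Finset.sum_congr rfl fun k _ => mul_comm _ _

lemma matP_id {n1 n2 : ℕ} :
    matP (ContinuousLinearMap.id ℝ ((Fin n1 → ℝ) × (Fin n2 → ℝ))) = (1 :
      Matrix (Fin n1 ⊕ Fin n2) (Fin n1 ⊕ Fin n2) ℝ) := by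
  ext i j
  cases i <;> cases j <;>
    simp [matP, basisP, Matrix.one_apply, Pi.single_apply, eq_comm]

lemma continuousOn_matP_fderiv {n1 n2 : ℕ}
    {Xt : Set ((Fin n1 → ℝ) × (Fin n2 → ℝ))} (hXt : IsOpen Xt)
    {φ : ((Fin n1 → ℝ) × (Fin n2 → ℝ)) → ((Fin n1 → ℝ) × (Fin n2 → ℝ))}
    (hφ : ContDiffOn ℝ 1 φ Xt) :
    ContinuousOn (fun x => matP (fderiv ℝ φ x)) Xt := by
  have hf : ContinuousOn (fderiv ℝ φ) Xt := hφ.continuousOn_fderiv_of_isOpen hXt le_rfl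
  refine continuousOn_pi.mpr ?_
  intro i
  rw [continuousOn_pi]
  intro j
  have hc : Continuous fun T : ((Fin n1 → ℝ) × (Fin n2 → ℝ)) →L[ℝ]
      ((Fin n1 → ℝ) × (Fin n2 → ℝ)) => Sum.elim (T (basisP j)).1 (T (basisP j)).2 i := by
    cases i with
    | inl i1 =>
      exact (continuous_apply i1).comp (continuous_fst.comp
        (ContinuousLinearMap.apply ℝ _ (basisP j)).continuous)
    | inr i2 =>
      exact (continuous_apply i2).comp (continuous_snd.comp
        (ContinuousLinearMap.apply ℝ _ (basisP j)).continuous)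
  exact hc.comp_continuousOn hf

lemma continuousOn_matrix_mul' {X : Type*} [TopologicalSpace X] {s : Set X}
    {l m n : Type*} [Fintype m]
    {A : X → Matrix l m ℝ} {B : X → Matrix m n ℝ}
    (hA : ContinuousOn A s) (hB : ContinuousOn B s) :
    ContinuousOn (fun x => A x * B x) s := by
  refine continuousOn_pi.mpr ?_
  intro i
  rw [continuousOn_pi]
  intro j
  simp only [Matrix.mul_apply]
  apply continuousOn_finset_sum
  intro k _
  exact (((continuous_apply k).comp (continuous_apply i)).comp_continuousOn hA).mul
    (((continuous_apply j).comp (continuous_apply k)).comp_continuousOn hB)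

lemma matrix_mul_cancel_left {n1 n2 : ℕ} (A : Matrix (Fin n1) (Fin n1) ℝ)
    (B : Matrix (Fin n1) (Fin n2) ℝ) (hA : IsUnit A.det) (h : A * B = 0) : B = 0 := by
  have := congrArg (fun X => A⁻¹ * X) h
  simpa [← Matrix.mul_assoc, Matrix.nonsing_inv_mul A hA] using this

lemma matrix_mul_cancel_right {n1 n2 : ℕ} (A : Matrix (Fin n1) (Fin n1) ℝ)
    (B : Matrix (Fin n2) (Fin n1) ℝ) (hA : IsUnit A.det) (h : B * A = 0) : B = 0 := by
  have := congrArg (fun X => X * A⁻¹) h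
  simpa [Matrix.mul_assoc, Matrix.mul_nonsing_inv A hA] using this

lemma blockform {n1 n2 : ℕ} (Umat : Matrix (Fin n1 ⊕ Fin n2) (Fin n1 ⊕ Fin n2) ℝ)
    (E : Matrix (Fin n1) (Fin n1) ℝ) (M : Matrix (Fin n1 ⊕ Fin n2) (Fin n1 ⊕ Fin n2) ℝ) :
    Umatᵀ * (Matrix.fromBlocks E 0 0 0) * M =
      Matrix.fromBlocks
        (Umat.toBlocks₁₁ᵀ * E * M.toBlocks₁₁) (Umat.toBlocks₁₁ᵀ * E * M.toBlocks₁₂)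
        (Umat.toBlocks₁₂ᵀ * E * M.toBlocks₁₁) (Umat.toBlocks₁₂ᵀ * E * M.toBlocks₁₂) := by
  conv_lhs => rw [← Matrix.fromBlocks_toBlocks Umat, ← Matrix.fromBlocks_toBlocks M]
  simp [Matrix.fromBlocks_transpose, Matrix.fromBlocks_multiply, Matrix.mul_assoc]

/-- the transformed gradient pair of a semi-explicit gradient pair is
semi-explicit if and only if `D_{x̃₂}φ₁ = 0` and `U₁₂ = 0` everywhere on `X̃`. -/
theorem semiExplicit_structure_preserving_iff {n1 n2 : ℕ}
    (X1 : Set (Fin n1 → ℝ)) (X2 : Set (Fin n2 → ℝ))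
    (hX1 : IsOpen X1) (hX2 : IsOpen X2) (hX2conv : Convex ℝ X2)
    (H : ((Fin n1 → ℝ) × (Fin n2 → ℝ)) → ℝ) (hH : ContDiffOn ℝ 1 H (X1 ×ˢ X2))
    -- the semi-explicit gradient pair (E, z) on X = X1 × X2
    (E11 : ((Fin n1 → ℝ) × (Fin n2 → ℝ)) → Matrix (Fin n1) (Fin n1) ℝ)
    (hE11cont : ContinuousOn E11 (X1 ×ˢ X2))
    (hE11inv : ∀ x ∈ X1 ×ˢ X2, IsUnit (E11 x).det)
    (z : ((Fin n1 → ℝ) × (Fin n2 → ℝ)) → (Fin n1 ⊕ Fin n2 → ℝ))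
    (hzcont : ContinuousOn z (X1 ×ˢ X2))
    (hgradpair : ∀ x ∈ X1 ×ˢ X2,
      (Matrix.fromBlocks (E11 x) 0 0 0 :
        Matrix (Fin n1 ⊕ Fin n2) (Fin n1 ⊕ Fin n2) ℝ)ᵀ.mulVec (z x) = gradP H x)
    -- an invertible system transformation (φ, U) from X̃ = X̃1 × X̃2
    (Xt1 : Set (Fin n1 → ℝ)) (Xt2 : Set (Fin n2 → ℝ))
    (hXt1 : IsOpen Xt1) (hXt2 : IsOpen Xt2) (hXt2conv : Convex ℝ Xt2)
    (φ ψ : ((Fin n1 → ℝ) × (Fin n2 → ℝ)) → ((Fin n1 → ℝ) × (Fin n2 → ℝ)))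
    (hφ : ContDiffOn ℝ 1 φ (Xt1 ×ˢ Xt2)) (hφmap : Set.MapsTo φ (Xt1 ×ˢ Xt2) (X1 ×ˢ X2))
    (hψ : ContDiffOn ℝ 1 ψ (X1 ×ˢ X2)) (hψmap : Set.MapsTo ψ (X1 ×ˢ X2) (Xt1 ×ˢ Xt2))
    (hψφ : ∀ xt ∈ Xt1 ×ˢ Xt2, ψ (φ xt) = xt) (hφψ : ∀ x ∈ X1 ×ˢ X2, φ (ψ x) = x)
    (U : ((Fin n1 → ℝ) × (Fin n2 → ℝ)) → Matrix (Fin n1 ⊕ Fin n2) (Fin n1 ⊕ Fin n2) ℝ)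
    (hUcont : ContinuousOn U (Xt1 ×ˢ Xt2))
    (hUinv : ∀ xt ∈ Xt1 ×ˢ Xt2, IsUnit (U xt).det) :
    -- the transformed gradient pair is semi-explicit
    (∃ F : ((Fin n1 → ℝ) × (Fin n2 → ℝ)) → Matrix (Fin n1) (Fin n1) ℝ,
      ContinuousOn F (Xt1 ×ˢ Xt2) ∧
      (∀ xt ∈ Xt1 ×ˢ Xt2, IsUnit (F xt).det) ∧
      (∀ xt ∈ Xt1 ×ˢ Xt2,
        (U xt)ᵀ * (Matrix.fromBlocks (E11 (φ xt)) 0 0 0 :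
            Matrix (Fin n1 ⊕ Fin n2) (Fin n1 ⊕ Fin n2) ℝ) * jacP φ xt
          = (Matrix.fromBlocks (F xt) 0 0 0 :
              Matrix (Fin n1 ⊕ Fin n2) (Fin n1 ⊕ Fin n2) ℝ)))
    ↔
    (∀ xt ∈ Xt1 ×ˢ Xt2,
      (Matrix.of fun (i : Fin n1) (j : Fin n2) =>
        (fderiv ℝ φ xt ((0 : Fin n1 → ℝ), Pi.single j 1)).1 i) = (0 : Matrix (Fin n1) (Fin n2) ℝ)
      ∧ (U xt).toBlocks₁₂ = 0) := by
  have hs : IsOpen (Xt1 ×ˢ Xt2) := hXt1.prod hXt2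
  have hs' : IsOpen (X1 ×ˢ X2) := hX1.prod hX2
  have hjac : ∀ xt, jacP φ xt = matP (fderiv ℝ φ xt) := fun _ => rfl
  -- the matrix in the RHS is the ₁₂-block of the Jacobian
  have hM12eq : ∀ xt : (Fin n1 → ℝ) × (Fin n2 → ℝ),
      (Matrix.of fun (i : Fin n1) (j : Fin n2) =>
        (fderiv ℝ φ xt ((0 : Fin n1 → ℝ), Pi.single j 1)).1 i) = (jacP φ xt).toBlocks₁₂ := by
    intro xt; ext i j; rfl
  -- the Jacobian of φ is invertible on X̃
  have hMdet : ∀ xt ∈ Xt1 ×ˢ Xt2, IsUnit (jacP φ xt).det := by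
    intro xt hxt
    have hφd : DifferentiableAt ℝ φ xt :=
      (hφ.differentiableOn one_ne_zero).differentiableAt (hs.mem_nhds hxt)
    have hψd : DifferentiableAt ℝ ψ (φ xt) :=
      (hψ.differentiableOn one_ne_zero).differentiableAt (hs'.mem_nhds (hφmap hxt))
    have hcomp : fderiv ℝ (ψ ∘ φ) xt = (fderiv ℝ ψ (φ xt)).comp (fderiv ℝ φ xt) :=
      fderiv_comp xt hψd hφd
    have hid : fderiv ℝ (ψ ∘ φ) xt = fderiv ℝ id xt :=
      Filter.EventuallyEq.fderiv_eq (Filter.eventually_of_mem (hs.mem_nhds hxt) hψφ)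
    have hmul : matP (fderiv ℝ ψ (φ xt)) * matP (fderiv ℝ φ xt) = 1 := by
      rw [← matP_comp, ← hcomp, hid, fderiv_id, matP_id]
    have hdet : (matP (fderiv ℝ ψ (φ xt))).det * (matP (fderiv ℝ φ xt)).det = 1 := by
      rw [← Matrix.det_mul, hmul, Matrix.det_one]
    rw [hjac]
    exact IsUnit.of_mul_eq_one _ (by rw [mul_comm] at hdet; exact hdet)
  constructor
  · rintro ⟨F, hFc, hFinv, hFeq⟩ xt hxt
    have heq := (blockform (U xt) (E11 (φ xt)) (jacP φ xt)).symm.trans (hFeq xt hxt)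
    have h11 : (U xt).toBlocks₁₁ᵀ * E11 (φ xt) * (jacP φ xt).toBlocks₁₁ = F xt :=
      congrArg Matrix.toBlocks₁₁ heq
    have h12 : (U xt).toBlocks₁₁ᵀ * E11 (φ xt) * (jacP φ xt).toBlocks₁₂ = 0 :=
      congrArg Matrix.toBlocks₁₂ heq
    have h21 : (U xt).toBlocks₁₂ᵀ * E11 (φ xt) * (jacP φ xt).toBlocks₁₁ = 0 :=
      congrArg Matrix.toBlocks₂₁ heq
    have hdet : IsUnit ((U xt).toBlocks₁₁ᵀ * E11 (φ xt) * (jacP φ xt).toBlocks₁₁).det := by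
      rw [h11]; exact hFinv xt hxt
    simp only [Matrix.det_mul, isUnit_iff_ne_zero, mul_ne_zero_iff] at hdet
    obtain ⟨⟨hU11, hE⟩, hM11⟩ := hdet
    constructor
    · rw [hM12eq]
      refine matrix_mul_cancel_left ((U xt).toBlocks₁₁ᵀ * E11 (φ xt)) _ ?_ ?_
      · simp only [Matrix.det_mul, isUnit_iff_ne_zero]
        exact mul_ne_zero hU11 hE
      · rw [Matrix.mul_assoc] at h12 ⊢; exact h12
    · rw [← Matrix.transpose_eq_zero]
      refine matrix_mul_cancel_right (E11 (φ xt) * (jacP φ xt).toBlocks₁₁) _ ?_ ?_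
      · simp only [Matrix.det_mul, isUnit_iff_ne_zero]
        exact mul_ne_zero hE hM11
      · rw [← Matrix.mul_assoc]; exact h21
  · intro h
    refine ⟨fun xt => (U xt).toBlocks₁₁ᵀ * E11 (φ xt) * (jacP φ xt).toBlocks₁₁, ?_, ?_, ?_⟩
    · -- continuity
      have hU11 : ContinuousOn (fun xt => (U xt).toBlocks₁₁ᵀ) (Xt1 ×ˢ Xt2) := by
        refine continuousOn_pi.mpr ?_; intro i; rw [continuousOn_pi]; intro j
        exact ((continuous_apply (Sum.inl i : Fin n1 ⊕ Fin n2)).comp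
          (continuous_apply (Sum.inl j : Fin n1 ⊕ Fin n2))).comp_continuousOn hUcont
      have hEφ : ContinuousOn (fun xt => E11 (φ xt)) (Xt1 ×ˢ Xt2) :=
        hE11cont.comp hφ.continuousOn hφmap
      have hJ : ContinuousOn (fun xt => (jacP φ xt).toBlocks₁₁) (Xt1 ×ˢ Xt2) := by
        have := continuousOn_matP_fderiv hs hφ
        refine continuousOn_pi.mpr ?_; intro i; rw [continuousOn_pi]; intro j
        exact ((continuous_apply (Sum.inl j : Fin n1 ⊕ Fin n2)).comp
          (continuous_apply (Sum.inl i : Fin n1 ⊕ Fin n2))).comp_continuousOn this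
      exact continuousOn_matrix_mul' (continuousOn_matrix_mul' hU11 hEφ) hJ
    · -- invertibility
      intro xt hxt
      obtain ⟨hJ12, hU12⟩ := h xt hxt
      rw [hM12eq] at hJ12
      have hU11 : IsUnit ((U xt).toBlocks₁₁).det := by
        have := hUinv xt hxt
        rw [← Matrix.fromBlocks_toBlocks (U xt), hU12, Matrix.det_fromBlocks_zero₁₂] at this
        simp only [isUnit_iff_ne_zero, mul_ne_zero_iff] at this ⊢
        exact this.1
      have hM11 : IsUnit ((jacP φ xt).toBlocks₁₁).det := by
        have := hMdet xt hxt
        rw [← Matrix.fromBlocks_toBlocks (jacP φ xt), hJ12,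
          Matrix.det_fromBlocks_zero₁₂] at this
        simp only [isUnit_iff_ne_zero, mul_ne_zero_iff] at this ⊢
        exact this.1
      have hE : IsUnit (E11 (φ xt)).det := hE11inv (φ xt) (hφmap hxt)
      simp only [Matrix.det_mul, Matrix.det_transpose]
      exact ((hU11.mul hE).mul hM11)
    · -- block equation
      intro xt hxt
      obtain ⟨hJ12, hU12⟩ := h xt hxt
      rw [hM12eq] at hJ12
      rw [blockform, hJ12, hU12]
      simp [Matrix.mul_zero, Matrix.zero_mul]
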